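/- Let H be a real Hilbert space, K a nonempty convex subset of H, g : H → H a map whose range contains K (for every x ∈ K there exists w ∈ H with g w = x), p > 1, μ > 0, and F : H → ℝ Fréchet differentiable. Then F is higher order strongly general convex with respect to g, i.e. F(g u + t·(g v − g u)) ≤ (1−t)·F(g u) + t·F(g v) − μ·(t^p·(1−t) + t·(1−t)^p)·‖g v − g u‖^p for all u, v with g u, g v ∈ K and all t ∈ [0,1], if and only if F(g v) − F(g u) ≥ ⟨∇F(g u), g v − g u⟩ + μ·‖g v − g u‖^p for all u, v ∈ H with g u, g v ∈ K. -/

import Mathlib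

open scoped RealInnerProductSpace

theorem stmt_8 {H : Type*} [NormedAddCommGroup H] [InnerProductSpace ℝ H] [CompleteSpace H]
    (K : Set H) (hK : K.Nonempty) (hKconv : Convex ℝ K)
    (g : H → H) (hg : ∀ x ∈ K, ∃ w : H, g w = x)
    (p μ : ℝ) (hp : 1 < p) (hμ : 0 < μ)
    (F : H → ℝ) (F' : H → H) (hF : ∀ x : H, HasGradientAt F (F' x) x) :
    (∀ u v : H, g u ∈ K → g v ∈ K → ∀ t ∈ Set.Icc (0 : ℝ) 1,
        F (g u + t • (g v - g u)) ≤ (1 - t) * F (g u) + t * F (g v)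
          - μ * (t ^ p * (1 - t) + t * (1 - t) ^ p) * ‖g v - g u‖ ^ p) ↔
      ∀ u v : H, g u ∈ K → g v ∈ K →
        ⟪F' (g u), g v - g u⟫ + μ * ‖g v - g u‖ ^ p ≤ F (g v) - F (g u) := by
  constructor
  · intro h u v hu hv
    have hc : HasDerivAt (fun t : ℝ => F (g u + t • (g v - g u)))
        ⟪F' (g u), g v - g u⟫ 0 := by
      have h1 : HasDerivAt (fun t : ℝ => g u + t • (g v - g u)) (g v - g u) 0 := by
        simpa using ((hasDerivAt_id (0 : ℝ)).smul_const (g v - g u)).const_add (g u)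
      have h2 := (hF (g u + (0 : ℝ) • (g v - g u))).hasFDerivAt
      have h3 := h2.comp_hasDerivAt 0 h1
      simp at h3
      exact h3
    have hslope : Filter.Tendsto (slope (fun t : ℝ => F (g u + t • (g v - g u))) 0)
        (nhdsWithin 0 (Set.Ioi 0)) (nhds ⟪F' (g u), g v - g u⟫) := by
      have := hasDerivAt_iff_tendsto_slope.mp hc
      exact this.mono_left (nhdsWithin_mono 0 (fun x hx => ne_of_gt hx))
    have hT1 : ContinuousAt (fun t : ℝ => t ^ (p - 1)) 0 :=
      Real.continuousAt_rpow_const 0 (p - 1) (Or.inr (by linarith))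
    have hT2 : ContinuousAt (fun t : ℝ => (1 - t) ^ p) 0 := by
      apply ContinuousAt.rpow_const (by fun_prop)
      left; norm_num
    have hT3 : ContinuousAt (fun t : ℝ =>
        F (g v) - F (g u) - μ * (t ^ (p - 1) * (1 - t) + (1 - t) ^ p) * ‖g v - g u‖ ^ p) 0 := by
      exact ContinuousAt.sub continuousAt_const
        (ContinuousAt.mul (ContinuousAt.mul continuousAt_const
          ((hT1.mul (by fun_prop)).add hT2)) continuousAt_const)
    have hTR : Filter.Tendsto (fun t : ℝ =>
        F (g v) - F (g u) - μ * (t ^ (p - 1) * (1 - t) + (1 - t) ^ p) * ‖g v - g u‖ ^ p)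
        (nhdsWithin 0 (Set.Ioi 0))
        (nhds (F (g v) - F (g u) - μ * ‖g v - g u‖ ^ p)) := by
      have h0 : F (g v) - F (g u) - μ * ‖g v - g u‖ ^ p
          = (fun t : ℝ =>
          F (g v) - F (g u) - μ * (t ^ (p - 1) * (1 - t) + (1 - t) ^ p) * ‖g v - g u‖ ^ p) 0 := by
        simp [Real.zero_rpow (show p - 1 ≠ 0 by linarith), Real.one_rpow]
      rw [h0]
      exact hT3.tendsto.mono_left nhdsWithin_le_nhds
    have hev : ∀ᶠ t in nhdsWithin (0 : ℝ) (Set.Ioi 0),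
        slope (fun t : ℝ => F (g u + t • (g v - g u))) 0 t
          ≤ F (g v) - F (g u) - μ * (t ^ (p - 1) * (1 - t) + (1 - t) ^ p) * ‖g v - g u‖ ^ p := by
      filter_upwards [Ioc_mem_nhdsGT_of_mem (Set.mem_Ico.mpr ⟨le_refl (0:ℝ), one_pos⟩)]
        with t ht
      obtain ⟨ht0, ht1⟩ := ht
      have hkey := h u v hu hv t ⟨le_of_lt ht0, ht1⟩
      have hslope_eq : slope (fun t : ℝ => F (g u + t • (g v - g u))) 0 t
          = (F (g u + t • (g v - g u)) - F (g u)) / t := by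
        rw [slope_def_field]
        simp
      rw [hslope_eq, div_le_iff₀ ht0]
      have hts : t ^ p = t * t ^ (p - 1) := by
        nth_rewrite 1 [show p = 1 + (p - 1) by ring]
        rw [Real.rpow_add ht0, Real.rpow_one]
      rw [hts] at hkey
      nlinarith [hkey]
    have := le_of_tendsto_of_tendsto hslope hTR hev
    linarith
  · intro h u v hu hv t ht
    obtain ⟨ht0, ht1⟩ := ht
    set x : H := g u + t • (g v - g u) with hx
    have hxK : x ∈ K := by
      have : x = (1 - t) • g u + t • g v := by rw [hx]; module
      rw [this]
      exact hKconv hu hv (by linarith) ht0 (by ring)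
    obtain ⟨w, hw⟩ := hg x hxK
    have hwK : g w ∈ K := by rw [hw]; exact hxK
    have hA := h w v hwK hv
    have hB := h w u hwK hu
    rw [hw] at hA hB
    have e1 : g v - x = (1 - t) • (g v - g u) := by rw [hx]; module
    have e2 : g u - x = (-t) • (g v - g u) := by rw [hx]; module
    have n1 : ‖g v - x‖ ^ p = (1 - t) ^ p * ‖g v - g u‖ ^ p := by
      rw [e1, norm_smul, Real.norm_eq_abs, abs_of_nonneg (by linarith),
        Real.mul_rpow (by linarith) (norm_nonneg _)]
    have n2 : ‖g u - x‖ ^ p = t ^ p * ‖g v - g u‖ ^ p := by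
      rw [e2, norm_smul, Real.norm_eq_abs, abs_neg, abs_of_nonneg ht0,
        Real.mul_rpow ht0 (norm_nonneg _)]
    have i1 : ⟪F' x, g v - x⟫ = (1 - t) * ⟪F' x, g v - g u⟫ := by
      rw [e1, real_inner_smul_right]
    have i2 : ⟪F' x, g u - x⟫ = (-t) * ⟪F' x, g v - g u⟫ := by
      rw [e2, real_inner_smul_right]
    rw [n1, i1] at hA
    rw [n2, i2] at hB
    have hA' := mul_le_mul_of_nonneg_left hA ht0
    have hB' := mul_le_mul_of_nonneg_left hB (by linarith : (0:ℝ) ≤ 1 - t)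
    nlinarith [hA', hB']
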